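/- arXiv:1701.08351 — 3 statements merged into one kernel-verified Lean document; each statement's English description precedes it below -/
import Mathlib

section
/- Let L be a number field whose class number is a prime number, and suppose that for every integer f > 1 the classes of prime ideals of O_L that are unramified over ℚ and have residue degree f over ℚ do not generate Cl(L). Let a be a positive integer such that every rational prime p dividing a is unramified in L, all prime ideals of O_L above p have the same residue degree f_p over ℚ with f_p > 1, and f_p divides the p-adic valuation v_p(a). Then the norm equation |N_{L/ℚ}(x)| = a has a solution x in L. -/
set_option synthInstance.maxHeartbeats 400000

open NumberField Ideal
open scoped nonZeroDivisors

lemma aux_absNorm_eq (L : Type) [Field L] [NumberField L] (p : ℕ) (hp : p.Prime)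
    (𝔭 : Ideal (𝓞 L)) (hpr : 𝔭.IsPrime)
    (hc : 𝔭.comap (algebraMap ℤ (𝓞 L)) = Ideal.span {(p : ℤ)}) :
    Ideal.absNorm 𝔭
      = p ^ Ideal.inertiaDeg' (𝔭.comap (algebraMap ℤ (𝓞 L))) 𝔭 := by
  haveI : Fact p.Prime := ⟨hp⟩
  have hmax : (Ideal.span {(p : ℤ)}).IsMaximal :=
    PrincipalIdealRing.isMaximal_of_irreducible
      (Int.prime_iff_natAbs_prime.mpr (by simpa)).irreducible
  rw [hc]
  haveI : 𝔭.LiesOver (Ideal.span {(p : ℤ)}) := ⟨hc.symm⟩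
  haveI := hmax
  have hbot : 𝔭 ≠ ⊥ := by
    intro h
    rw [h, ← RingHom.ker_eq_comap_bot] at hc
    have : ((p : ℤ)) ∈ RingHom.ker (algebraMap ℤ (𝓞 L)) := by
      rw [hc]; exact Ideal.subset_span rfl
    rw [RingHom.mem_ker] at this
    exact hp.ne_zero (by exact_mod_cast
      (map_eq_zero_iff _ (FaithfulSMul.algebraMap_injective ℤ (𝓞 L))).mp this)
  haveI : Finite ((𝓞 L) ⧸ 𝔭) := by
    rw [← Ideal.absNorm_ne_zero_iff]
    exact Ideal.absNorm_ne_zero_iff_mem_nonZeroDivisors.mpr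
      (mem_nonZeroDivisors_iff_ne_zero.mpr hbot)
  haveI instV : Fintype ((𝓞 L) ⧸ 𝔭) := Fintype.ofFinite _
  haveI instK : Fintype (ℤ ⧸ Ideal.span {(p : ℤ)}) :=
    Fintype.ofEquiv (ZMod p) (Int.quotientSpanNatEquivZMod p).toEquiv.symm
  have hcard : Fintype.card (ℤ ⧸ Ideal.span {(p : ℤ)}) = p := by
    rw [Fintype.card_congr (Int.quotientSpanNatEquivZMod p).toEquiv, ZMod.card]
  have key := @Module.card_eq_pow_finrank (ℤ ⧸ Ideal.span {(p : ℤ)}) ((𝓞 L) ⧸ 𝔭)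
    (Ideal.Quotient.field _).toDivisionRing inferInstance Algebra.toModule instK instV
  rw [Ideal.inertiaDeg'_algebraMap, Ideal.absNorm_apply, Submodule.cardQuot_apply,
    Nat.card_eq_fintype_card, key, hcard]

/-- Let `L` be a number field whose class number is prime, and suppose that for every
integer `f > 1` the classes of prime ideals of `𝓞 L` unramified over `ℚ` of residue degree
`f` over `ℚ` do not generate `Cl(L)`.  Let `a` be a positive integer such that every rational
prime `p` dividing `a` is unramified in `L`, all primes of `𝓞 L` above `p` have the same
residue degree `f_p > 1` over `ℚ`, and `f_p ∣ v_p(a)`.  Then `|N_{L/ℚ}(x)| = a` has a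
solution `x ∈ L`. -/
theorem statement5 (L : Type) [Field L] [NumberField L]
    (hcl : (Nat.card (ClassGroup (𝓞 L))).Prime)
    (hngen : ∀ f : ℕ, 1 < f →
      Subgroup.closure
        {c : ClassGroup (𝓞 L) | ∃ (𝔭 : Ideal (𝓞 L)) (h𝔭 : 𝔭 ∈ (Ideal (𝓞 L))⁰),
          𝔭.IsPrime ∧
          Ideal.ramificationIdx' (𝔭.comap (algebraMap ℤ (𝓞 L))) 𝔭 = 1 ∧
          Ideal.inertiaDeg' (𝔭.comap (algebraMap ℤ (𝓞 L))) 𝔭 = f ∧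
          c = ClassGroup.mk0 ⟨𝔭, h𝔭⟩} ≠ ⊤)
    (a : ℕ) (ha : 0 < a)
    (hprimes : ∀ p : ℕ, p.Prime → p ∣ a →
      (∀ 𝔭 : Ideal (𝓞 L), 𝔭.IsPrime →
        𝔭.comap (algebraMap ℤ (𝓞 L)) = Ideal.span {(p : ℤ)} →
        Ideal.ramificationIdx' (𝔭.comap (algebraMap ℤ (𝓞 L))) 𝔭 = 1) ∧
      ∃ f : ℕ, 1 < f ∧
        (∀ 𝔭 : Ideal (𝓞 L), 𝔭.IsPrime →
          𝔭.comap (algebraMap ℤ (𝓞 L)) = Ideal.span {(p : ℤ)} →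
          Ideal.inertiaDeg' (𝔭.comap (algebraMap ℤ (𝓞 L))) 𝔭 = f) ∧
        f ∣ padicValNat p a) :
    ∃ x : L, |Algebra.norm ℚ x| = (a : ℚ) := by
  haveI : Fact (Nat.card (ClassGroup (𝓞 L))).Prime := ⟨hcl⟩
  have hstep : ∀ p ∈ a.primeFactors,
      ∃ y : 𝓞 L, (Algebra.norm ℤ y).natAbs = p ^ (a.factorization p) := by
    intro p hpmem
    have hp := Nat.prime_of_mem_primeFactors hpmem
    have hpa := Nat.dvd_of_mem_primeFactors hpmem
    obtain ⟨hram, f, hf, hdeg, hdvd⟩ := hprimes p hp hpa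
    have hmax : (Ideal.span {(p : ℤ)}).IsMaximal :=
      PrincipalIdealRing.isMaximal_of_irreducible
        (Int.prime_iff_natAbs_prime.mpr (by simpa)).irreducible
    haveI := hmax
    obtain ⟨𝔭, h𝔭max, h𝔭c⟩ := Ideal.exists_ideal_over_maximal_of_isIntegral
      (S := 𝓞 L) (Ideal.span {(p : ℤ)})
      (by rw [(RingHom.injective_iff_ker_eq_bot _).mp
        (FaithfulSMul.algebraMap_injective ℤ (𝓞 L))]; exact bot_le)
    have hpr : 𝔭.IsPrime := h𝔭max.isPrime
    have hbot : 𝔭 ≠ ⊥ := by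
      intro h
      rw [h, ← RingHom.ker_eq_comap_bot,
        (RingHom.injective_iff_ker_eq_bot _).mp
          (FaithfulSMul.algebraMap_injective ℤ (𝓞 L))] at h𝔭c
      exact hp.ne_zero (by exact_mod_cast
        Ideal.span_singleton_eq_bot.mp h𝔭c.symm)
    have h𝔭0 : 𝔭 ∈ (Ideal (𝓞 L))⁰ := mem_nonZeroDivisors_iff_ne_zero.mpr hbot
    have hcls : ClassGroup.mk0 ⟨𝔭, h𝔭0⟩ = 1 := by
      set S : Set (ClassGroup (𝓞 L)) :=
        {c : ClassGroup (𝓞 L) | ∃ (𝔭 : Ideal (𝓞 L)) (h𝔭 : 𝔭 ∈ (Ideal (𝓞 L))⁰),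
          𝔭.IsPrime ∧
          Ideal.ramificationIdx' (𝔭.comap (algebraMap ℤ (𝓞 L))) 𝔭 = 1 ∧
          Ideal.inertiaDeg' (𝔭.comap (algebraMap ℤ (𝓞 L))) 𝔭 = f ∧
          c = ClassGroup.mk0 ⟨𝔭, h𝔭⟩} with hS
      rcases Subgroup.eq_bot_or_eq_top_of_prime_card (Subgroup.closure S) with hb | ht
      · have hmem : ClassGroup.mk0 ⟨𝔭, h𝔭0⟩ ∈ Subgroup.closure S :=
          Subgroup.subset_closure ⟨𝔭, h𝔭0, hpr, hram 𝔭 hpr h𝔭c, hdeg 𝔭 hpr h𝔭c, rfl⟩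
        rw [hb] at hmem
        simpa using hmem
      · exact absurd ht (hngen f hf)
    obtain ⟨π, hπ⟩ := (ClassGroup.mk0_eq_one_iff h𝔭0).mp hcls
    have hnorm : (Algebra.norm ℤ π).natAbs = p ^ f := by
      have h2 := aux_absNorm_eq L p hp 𝔭 hpr h𝔭c
      rw [hdeg 𝔭 hpr h𝔭c, hπ] at h2
      rwa [← Ideal.absNorm_span_singleton]
    obtain ⟨k, hk⟩ := hdvd
    refine ⟨π ^ k, ?_⟩
    rw [map_pow, Int.natAbs_pow, hnorm, ← pow_mul, Nat.factorization_def a hp, hk]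
  choose g hg using hstep
  refine ⟨((∏ p ∈ a.primeFactors.attach, g p.1 p.2 : 𝓞 L) : L), ?_⟩
  rw [← Algebra.coe_norm_int]
  have hN : (Algebra.norm ℤ (∏ p ∈ a.primeFactors.attach, g p.1 p.2)).natAbs = a := by
    rw [map_prod]
    have : ((∏ p ∈ a.primeFactors.attach, Algebra.norm ℤ (g p.1 p.2)).natAbs)
        = ∏ p ∈ a.primeFactors.attach, (Algebra.norm ℤ (g p.1 p.2)).natAbs := by
      exact_mod_cast map_prod Int.natAbsHom _ _
    rw [this]
    calc ∏ p ∈ a.primeFactors.attach, (Algebra.norm ℤ (g p.1 p.2)).natAbs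
        = ∏ p ∈ a.primeFactors.attach, p.1 ^ (a.factorization p.1) := by
          exact Finset.prod_congr rfl fun p _ => hg p.1 p.2
      _ = ∏ p ∈ a.primeFactors, p ^ (a.factorization p) := Finset.prod_attach _ (fun q => q ^ a.factorization q)
      _ = a := by
          rw [← Nat.support_factorization, ← Finsupp.prod]
          exact Nat.factorization_prod_pow_eq_self ha.ne'
  conv_rhs => rw [← hN]
  rw [Nat.cast_natAbs]
  push_cast
  rfl
end

section
/- Let L be a number field that is Galois over ℚ and whose class number h_L is coprime to the degree [L:ℚ]. Then for every rational prime p, if f denotes the common residue degree over ℚ of the prime ideals of O_L above p, there exists α in L with |N_{L/ℚ}(α)| = p^f. -/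
open NumberField Ideal
open scoped nonZeroDivisors

set_option synthInstance.maxHeartbeats 1000000 in
/-- Let `L` be a number field, Galois over `ℚ`, whose class number is coprime to the degree
`[L:ℚ]`.  Then for every rational prime `p`, if `f` is the common residue degree over `ℚ`
of the primes of `𝓞 L` above `p`, there exists `α ∈ L` with `|N_{L/ℚ}(α)| = p ^ f`. -/
theorem statement7 (L : Type) [Field L] [NumberField L] [IsGalois ℚ L]
    (hcop : (Nat.card (ClassGroup (𝓞 L))).Coprime (Module.finrank ℚ L))
    (p : ℕ) (hp : p.Prime) (f : ℕ)
    (hf : ∀ 𝔭 : Ideal (𝓞 L), 𝔭.IsPrime →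
      𝔭.comap (algebraMap ℤ (𝓞 L)) = Ideal.span {(p : ℤ)} →
      Ideal.inertiaDeg' (𝔭.comap (algebraMap ℤ (𝓞 L))) 𝔭 = f) :
    ∃ α : L, |Algebra.norm ℚ α| = (p : ℚ) ^ f := by
  -- Choose a maximal ideal `𝔭` of `𝓞 L` lying over `p`.
  have hq : (Ideal.span {(p : ℤ)}).IsMaximal :=
    PrincipalIdealRing.isMaximal_of_irreducible
      (Nat.prime_iff_prime_int.mp hp).irreducible
  have hker : RingHom.ker (algebraMap ℤ (𝓞 L)) = ⊥ :=
    (RingHom.injective_iff_ker_eq_bot _).mp (RingHom.injective_int _)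
  obtain ⟨𝔭, h𝔭max, hcomap⟩ :=
    Ideal.exists_ideal_over_maximal_of_isIntegral (R := ℤ) (S := 𝓞 L)
      (Ideal.span {(p : ℤ)}) (hker ▸ bot_le)
  have hff : Ideal.inertiaDeg' (Ideal.span {(p : ℤ)}) 𝔭 = f := by
    have := hf 𝔭 h𝔭max.isPrime hcomap
    rwa [hcomap] at this
  have h𝔭ne : 𝔭 ≠ ⊥ := by
    intro h
    have hmem : (p : ℤ) ∈ Ideal.comap (algebraMap ℤ (𝓞 L)) 𝔭 := by
      rw [hcomap]; exact Ideal.mem_span_singleton_self _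
    rw [h] at hmem
    have h0 : ((p : ℕ) : 𝓞 L) = 0 := by simpa using hmem
    exact hp.ne_zero (by exact_mod_cast h0)
  -- The absolute norm of `𝔭` is `p ^ f`.
  have key : Ideal.absNorm 𝔭 = p ^ f := by
    rw [← hff]
    rw [Ideal.inertiaDeg', dif_pos hcomap]
    letI : Algebra (ℤ ⧸ Ideal.span {(p : ℤ)}) (𝓞 L ⧸ 𝔭) :=
      Ideal.Quotient.algebraQuotientOfLEComap (le_of_eq hcomap.symm)
    letI : Field (ℤ ⧸ Ideal.span {(p : ℤ)}) := Ideal.Quotient.field _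
    letI : Fintype (𝓞 L ⧸ 𝔭) := @Fintype.ofFinite _ (Ideal.finiteQuotientOfFreeOfNeBot 𝔭 h𝔭ne)
    letI : Fintype (ℤ ⧸ Ideal.span {(p : ℤ)}) :=
      @Fintype.ofFinite _ (Ideal.finiteQuotientOfFreeOfNeBot _ (by
        simp [Ideal.span_singleton_eq_bot, hp.ne_zero, Nat.cast_eq_zero]))
    have hcardZ : Fintype.card (ℤ ⧸ Ideal.span {(p : ℤ)}) = p := by
      rw [← Nat.card_eq_fintype_card,
        Nat.card_congr (Int.quotientSpanNatEquivZMod p).toEquiv, Nat.card_zmod]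
    rw [Ideal.absNorm_apply, Submodule.cardQuot_apply, Nat.card_eq_fintype_card]
    calc Fintype.card (𝓞 L ⧸ 𝔭)
        = Fintype.card (ℤ ⧸ Ideal.span {(p : ℤ)}) ^
          Module.finrank (ℤ ⧸ Ideal.span {(p : ℤ)}) (𝓞 L ⧸ 𝔭) := Module.card_eq_pow_finrank
      _ = p ^ Module.finrank (ℤ ⧸ Ideal.span {(p : ℤ)}) (𝓞 L ⧸ 𝔭) := by rw [hcardZ]
  clear hf hff hcomap hker hq
  -- The class-group argument.
  set n := Module.finrank ℚ L with hn
  have hn1 : 1 ≤ n := Module.finrank_pos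
  have h𝔭0 : 𝔭 ∈ (Ideal (𝓞 L))⁰ := mem_nonZeroDivisors_iff_ne_zero.mpr h𝔭ne
  set d := orderOf (ClassGroup.mk0 ⟨𝔭, h𝔭0⟩) with hdd
  have hd0 : 0 < d := orderOf_pos _
  haveI : NeZero d := ⟨hd0.ne'⟩
  have hd : d ∣ Nat.card (ClassGroup (𝓞 L)) := orderOf_dvd_natCard _
  have hnd : Nat.Coprime n d := ((Nat.Coprime.coprime_dvd_left hd hcop)).symm
  set u : (ZMod d)ˣ := ZMod.unitOfCoprime n hnd with hu
  set k : ℕ := ((u⁻¹ : (ZMod d)ˣ) : ZMod d).val + d with hk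
  have hkn : (k * n) ≡ 1 [MOD d] := by
    have : ((k * n : ℕ) : ZMod d) = ((1 : ℕ) : ZMod d) := by
      push_cast
      rw [hk]
      push_cast
      rw [ZMod.natCast_self, add_zero, ZMod.natCast_val, ZMod.cast_id]
      have : ((n : ZMod d)) = (u : ZMod d) := (ZMod.coe_unitOfCoprime n hnd).symm
      rw [this, ← Units.val_mul, inv_mul_cancel, Units.val_one]
    exact (ZMod.natCast_eq_natCast_iff _ _ _).mp this
  have hkn1 : 1 ≤ k * n := Nat.one_le_iff_ne_zero.mpr (by positivity)
  set m : ℕ := k * n - 1 with hm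
  have hmkn : m + 1 = k * n := Nat.succ_pred_eq_of_pos hkn1
  have hdm : d ∣ m := (Nat.modEq_iff_dvd' hkn1).mp hkn.symm
  have hpow1 : ClassGroup.mk0 ⟨𝔭, h𝔭0⟩ ^ m = 1 := orderOf_dvd_iff_pow_eq_one.mp hdm
  have hprin : (𝔭 ^ m).IsPrincipal := by
    rw [← ClassGroup.mk0_eq_one_iff (pow_mem h𝔭0 m)]
    rw [show (⟨𝔭 ^ m, pow_mem h𝔭0 m⟩ : (Ideal (𝓞 L))⁰) = ⟨𝔭, h𝔭0⟩ ^ m from rfl]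
    rw [map_pow]
    exact hpow1
  obtain ⟨β, hβ⟩ := hprin
  have hβnorm : (Algebra.norm ℤ β).natAbs = p ^ (f * m) := by
    have h1 : Ideal.absNorm (𝔭 ^ m) = p ^ (f * m) := by
      rw [map_pow, key, ← pow_mul]
    rw [hβ] at h1
    rw [← Ideal.absNorm_span_singleton β]
    exact h1
  have hβQ : |Algebra.norm ℚ (algebraMap (𝓞 L) L β)| = (p : ℚ) ^ (f * m) := by
    rw [← Algebra.coe_norm_int, ← Int.cast_abs, Int.abs_eq_natAbs, hβnorm]
    push_cast
    ring
  -- Final construction of `α`.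
  have hβL0 : (algebraMap (𝓞 L) L β) ≠ 0 := by
    intro h0
    rw [h0] at hβQ
    simp only [Algebra.norm_zero, abs_zero] at hβQ
    exact (pow_ne_zero _ (by exact_mod_cast hp.ne_zero : (p:ℚ) ≠ 0)) hβQ.symm
  refine ⟨(p : L) ^ (f * k) / (algebraMap (𝓞 L) L β), ?_⟩
  have hdiv : ((p : L) ^ (f * k) / (algebraMap (𝓞 L) L β)) * (algebraMap (𝓞 L) L β)
      = (p : L) ^ (f * k) := div_mul_cancel₀ _ hβL0
  have hnp : Algebra.norm ℚ ((p : L) ^ (f * k)) = (p : ℚ) ^ (n * (f * k)) := by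
    rw [map_pow]
    have : ((p : ℕ) : L) = algebraMap ℚ L ((p : ℕ) : ℚ) := by push_cast; simp
    rw [this, Algebra.norm_algebraMap, ← pow_mul, ← hn]
  have := congrArg (fun x => |Algebra.norm ℚ x|) hdiv
  simp only [_root_.map_mul, abs_mul] at this
  rw [hβQ, hnp] at this
  have hcalc : (p : ℚ) ^ (n * (f * k)) = (p : ℚ) ^ (f * m) * (p : ℚ) ^ f := by
    rw [← pow_add]
    congr 1
    have : n * (f * k) = f * (k * n) := by ring
    rw [this, ← hmkn]
    ring
  rw [hcalc, abs_of_nonneg (by positivity : (0:ℚ) ≤ (p:ℚ)^(f*m) * (p:ℚ)^f),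
    mul_comm ((p:ℚ)^(f*m))] at this
  exact mul_right_cancel₀ (pow_ne_zero _ (by exact_mod_cast hp.ne_zero : (p:ℚ) ≠ 0)) this
end

section
/- In the integral group ring ℤ[G] of G = (ℤ/23ℤ)ˣ, there do not exist integers a_0, a_1, …, a_11 such that σ_1 + σ_5 = a_0·N + a_1·f_1 + a_2·f_2 + … + a_11·f_11. -/
/-- `θ_a = Σ_{i=1}^{22} ⌊a i / 23⌋ σ_i⁻¹` in `ℤ[(ℤ/23ℤ)ˣ]`, where `σ_i` is the unit with
canonical representative `i`. -/
noncomputable def theta (a : ℕ) : MonoidAlgebra ℤ (ZMod 23)ˣ :=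
  ∑ u : (ZMod 23)ˣ, MonoidAlgebra.single u⁻¹ ((a * (u : ZMod 23).val / 23 : ℕ) : ℤ)

/-- `f_i = θ_{i+1} - θ_i`. -/
noncomputable def fKummer (i : ℕ) : MonoidAlgebra ℤ (ZMod 23)ˣ := theta (i + 1) - theta i

/-- The `G`-trace `N = Σ_{σ ∈ G} σ` in `ℤ[(ℤ/23ℤ)ˣ]`. -/
noncomputable def Ntrace : MonoidAlgebra ℤ (ZMod 23)ˣ :=
  ∑ u : (ZMod 23)ˣ, MonoidAlgebra.single u 1

lemma mapply_add (x y : MonoidAlgebra ℤ (ZMod 23)ˣ) (e : (ZMod 23)ˣ) :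
    (x + y).coeff e = x.coeff e + y.coeff e := Finsupp.add_apply _ _ _

lemma mapply_sub (x y : MonoidAlgebra ℤ (ZMod 23)ˣ) (e : (ZMod 23)ˣ) :
    (x - y).coeff e = x.coeff e - y.coeff e := Finsupp.sub_apply _ _ _

lemma mapply_smul (c : ℤ) (x : MonoidAlgebra ℤ (ZMod 23)ˣ) (e : (ZMod 23)ˣ) :
    (c • x).coeff e = c * x.coeff e := Finsupp.smul_apply _ _ _

lemma mapply_sum {ι : Type*} (s : Finset ι) (f : ι → MonoidAlgebra ℤ (ZMod 23)ˣ)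
    (e : (ZMod 23)ˣ) : (∑ i ∈ s, f i).coeff e = ∑ i ∈ s, (f i).coeff e := by
  rw [MonoidAlgebra.coeff_sum]; exact Finsupp.finset_sum_apply _ _ _

lemma mapply_single (v : (ZMod 23)ˣ) (c : ℤ) (e : (ZMod 23)ˣ) [Decidable (v = e)] :
    (MonoidAlgebra.single v c).coeff e = if v = e then c else 0 := Finsupp.single_apply

lemma theta_apply (a : ℕ) (e : (ZMod 23)ˣ) :
    (theta a).coeff e = ((a * ((e⁻¹ : (ZMod 23)ˣ) : ZMod 23).val / 23 : ℕ) : ℤ) := by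
  unfold theta
  rw [mapply_sum, Finset.sum_eq_single e⁻¹]
  · rw [inv_inv]; exact Finsupp.single_eq_same
  · intro b _ hb
    exact Finsupp.single_eq_of_ne (Ne.symm (by simpa [inv_eq_iff_eq_inv] using hb))
  · intro h; exact absurd (Finset.mem_univ _) h

lemma Ntrace_apply (e : (ZMod 23)ˣ) : Ntrace.coeff e = 1 := by
  unfold Ntrace
  rw [mapply_sum, Finset.sum_eq_single e]
  · exact Finsupp.single_eq_same
  · intro b _ hb; exact Finsupp.single_eq_of_ne hb.symm
  · intro h; exact absurd (Finset.mem_univ _) h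

lemma inv_unit (a b : ℕ) (ha : Nat.Coprime a 23) (hb : Nat.Coprime b 23)
    (h : (a * b : ZMod 23) = 1) :
    (ZMod.unitOfCoprime a ha : (ZMod 23)ˣ)⁻¹ = ZMod.unitOfCoprime b hb := by
  apply inv_eq_of_mul_eq_one_right
  ext
  push_cast [ZMod.coe_unitOfCoprime]
  exact h

/-- In `ℤ[(ℤ/23ℤ)ˣ]` there are no integers `a_0, …, a_11` with
`σ_1 + σ_5 = a_0 N + a_1 f_1 + ⋯ + a_11 f_11`. -/
theorem statement8 :
    ¬ ∃ a : ℕ → ℤ,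
      MonoidAlgebra.single (ZMod.unitOfCoprime 1 (by decide) : (ZMod 23)ˣ) (1 : ℤ) +
        MonoidAlgebra.single (ZMod.unitOfCoprime 5 (by decide) : (ZMod 23)ˣ) (1 : ℤ) =
      a 0 • Ntrace + ∑ i ∈ Finset.Icc 1 11, a i • fKummer i := by
  rintro ⟨a, h⟩
  have H := congrArg (fun x : MonoidAlgebra ℤ (ZMod 23)ˣ =>
    x.coeff (ZMod.unitOfCoprime 5 (by decide)) - x.coeff (ZMod.unitOfCoprime 11 (by decide))
    - x.coeff (ZMod.unitOfCoprime 12 (by decide)) + x.coeff (ZMod.unitOfCoprime 18 (by decide))) h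
  simp only [mapply_add, mapply_sub, mapply_smul, mapply_sum, mapply_single,
    fKummer, theta_apply, Ntrace_apply,
    inv_unit 5 14 (by decide) (by decide) (by decide),
    inv_unit 11 21 (by decide) (by decide) (by decide),
    inv_unit 12 2 (by decide) (by decide) (by decide),
    inv_unit 18 9 (by decide) (by decide) (by decide),
    show ((ZMod.unitOfCoprime 14 (by decide) : (ZMod 23)ˣ) : ZMod 23).val = 14 by decide,
    show ((ZMod.unitOfCoprime 21 (by decide) : (ZMod 23)ˣ) : ZMod 23).val = 21 by decide,
    show ((ZMod.unitOfCoprime 2 (by decide) : (ZMod 23)ˣ) : ZMod 23).val = 2 by decide,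
    show ((ZMod.unitOfCoprime 9 (by decide) : (ZMod 23)ˣ) : ZMod 23).val = 9 by decide] at H
  rw [if_neg (show ¬(ZMod.unitOfCoprime 1 (by decide) : (ZMod 23)ˣ) = ZMod.unitOfCoprime 5 (by decide) from by decide),
    if_neg (show ¬(ZMod.unitOfCoprime 1 (by decide) : (ZMod 23)ˣ) = ZMod.unitOfCoprime 11 (by decide) from by decide),
    if_neg (show ¬(ZMod.unitOfCoprime 5 (by decide) : (ZMod 23)ˣ) = ZMod.unitOfCoprime 11 (by decide) from by decide),
    if_neg (show ¬(ZMod.unitOfCoprime 1 (by decide) : (ZMod 23)ˣ) = ZMod.unitOfCoprime 12 (by decide) from by decide),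
    if_neg (show ¬(ZMod.unitOfCoprime 5 (by decide) : (ZMod 23)ˣ) = ZMod.unitOfCoprime 12 (by decide) from by decide),
    if_neg (show ¬(ZMod.unitOfCoprime 1 (by decide) : (ZMod 23)ˣ) = ZMod.unitOfCoprime 18 (by decide) from by decide),
    if_neg (show ¬(ZMod.unitOfCoprime 5 (by decide) : (ZMod 23)ˣ) = ZMod.unitOfCoprime 18 (by decide) from by decide),
    if_true] at H
  simp only [add_zero, zero_add, sub_zero, mul_one] at H
  have hs : ∑ x ∈ Finset.Icc 1 11, ((a x * ((((x + 1) * 14 / 23 : ℕ) : ℤ) - ((x * 14 / 23 : ℕ) : ℤ))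
      - a x * ((((x + 1) * 21 / 23 : ℕ) : ℤ) - ((x * 21 / 23 : ℕ) : ℤ)))
      - a x * ((((x + 1) * 2 / 23 : ℕ) : ℤ) - ((x * 2 / 23 : ℕ) : ℤ))
      + a x * ((((x + 1) * 9 / 23 : ℕ) : ℤ) - ((x * 9 / 23 : ℕ) : ℤ))) = 0 := by
    apply Finset.sum_eq_zero
    intro x hx
    rw [Finset.mem_Icc] at hx
    obtain ⟨h1, h2⟩ := hx
    interval_cases x <;> norm_num
  rw [Finset.sum_add_distrib, Finset.sum_sub_distrib, Finset.sum_sub_distrib] at hs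
  linarith [H, hs]
end
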